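/- The set of lines {v ∈ L : B(v,v) = −1, B(v,K) = −1, B(v,C) = 0} is finite and has exactly 56 elements. -/

import Mathlib

noncomputable section
namespace ADEPaper

/-- The Picard lattice `L = ℤ^{n+2}` with basis `h = e 0`, `lᵢ = e i` for `1 ≤ i ≤ n+1`. -/
abbrev L (n : ℕ) : Type := Fin (n + 2) → ℤ

/-- The intersection form: `B(h,h) = 1`, `B(lᵢ,lᵢ) = -1`, distinct basis vectors orthogonal. -/
def B (n : ℕ) (v w : L n) : ℤ :=
  v 0 * w 0 - ∑ i : Fin (n + 1), v i.succ * w i.succ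

/-- The canonical class `K = -3h + l₁ + ⋯ + l_{n+1}`. -/
def K (n : ℕ) : L n := fun j => if j = 0 then -3 else 1

/-- `C = l_{n+1}`, the exceptional curve of the `Eₙ`-surface. -/
def C (n : ℕ) : L n := fun j => if j = Fin.last (n + 1) then 1 else 0

/-- The set of lines on an `E_7`-surface, i.e. classes `v` with `B(v,v) = B(v,K) = -1`
and `B(v,C) = 0`, is finite with exactly 56 elements. -/

def lo : Fin 4 → ℤ := ![0, -1, -1, -2]

def f (t : Fin 4 × (Fin 7 → Fin 2)) : L 7 := fun j =>
  if _hj0 : (j : ℕ) = 0 then ((t.1 : ℕ) : ℤ)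
  else if hj : (j : ℕ) < 8 then lo t.1 + ((t.2 ⟨(j : ℕ) - 1, by omega⟩ : ℕ) : ℤ)
  else 0

def P (t : Fin 4 × (Fin 7 → Fin 2)) : Prop :=
  B 7 (f t) (f t) = -1 ∧ B 7 (f t) (K 7) = -1 ∧ B 7 (f t) (C 7) = 0

instance : DecidablePred P := fun t => by unfold P; infer_instance

lemma cs6core (b c d e f g : ℤ) :
    (b+c+d+e+f+g)^2 ≤ 6*(b^2+c^2+d^2+e^2+f^2+g^2) := by
  nlinarith [sq_nonneg (b-c), sq_nonneg (b-d), sq_nonneg (b-e), sq_nonneg (b-f),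
    sq_nonneg (b-g), sq_nonneg (c-d), sq_nonneg (c-e), sq_nonneg (c-f), sq_nonneg (c-g),
    sq_nonneg (d-e), sq_nonneg (d-f), sq_nonneg (d-g), sq_nonneg (e-f), sq_nonneg (e-g),
    sq_nonneg (f-g)]

lemma cs6 (m b c d e f g S T : ℤ) (h1 : m+b+c+d+e+f+g = S)
    (h2 : m^2+b^2+c^2+d^2+e^2+f^2+g^2 = T) : (S - m)^2 ≤ 6*(T - m^2) := by
  have hb : S - m = b+c+d+e+f+g := by linarith
  have ht : T - m^2 = b^2+c^2+d^2+e^2+f^2+g^2 := by linarith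
  rw [hb, ht]; exact cs6core b c d e f g

lemma cs7 (a b c d e f g S T : ℤ) (h1 : a+b+c+d+e+f+g = S)
    (h2 : a^2+b^2+c^2+d^2+e^2+f^2+g^2 = T) : S^2 ≤ 7*T := by
  subst h1; subst h2
  nlinarith [sq_nonneg (a-b), sq_nonneg (a-c), sq_nonneg (a-d), sq_nonneg (a-e),
    sq_nonneg (a-f), sq_nonneg (a-g), sq_nonneg (b-c), sq_nonneg (b-d), sq_nonneg (b-e),
    sq_nonneg (b-f), sq_nonneg (b-g), sq_nonneg (c-d), sq_nonneg (c-e), sq_nonneg (c-f),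
    sq_nonneg (c-g), sq_nonneg (d-e), sq_nonneg (d-f), sq_nonneg (d-g), sq_nonneg (e-f),
    sq_nonneg (e-g), sq_nonneg (f-g)]

lemma q0 (m : ℤ) (h : (1 - 3*0 - m)^2 ≤ 6*(0^2 + 1 - m^2)) : 0 ≤ m ∧ m ≤ 1 := by
  constructor <;> nlinarith [h, sq_nonneg (m+1), sq_nonneg (m-1), sq_nonneg m]
lemma q1 (m : ℤ) (h : (1 - 3*1 - m)^2 ≤ 6*(1^2 + 1 - m^2)) : -1 ≤ m ∧ m ≤ 0 := by
  constructor <;> nlinarith [h, sq_nonneg (m+2), sq_nonneg (m-1), sq_nonneg m]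
lemma q2 (m : ℤ) (h : (1 - 3*2 - m)^2 ≤ 6*(2^2 + 1 - m^2)) : -1 ≤ m ∧ m ≤ 0 := by
  constructor <;> nlinarith [h, sq_nonneg (m+2), sq_nonneg (m-1), sq_nonneg m]
lemma q3 (m : ℤ) (h : (1 - 3*3 - m)^2 ≤ 6*(3^2 + 1 - m^2)) : -2 ≤ m ∧ m ≤ -1 := by
  constructor <;> nlinarith [h, sq_nonneg (m+3), sq_nonneg m, sq_nonneg (m+1)]

set_option maxHeartbeats 2000000 in
lemma forward (v : L 7) (hv : B 7 v v = -1 ∧ B 7 v (K 7) = -1 ∧ B 7 v (C 7) = 0) :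
    ∃ t, P t ∧ f t = v := by
  have key : ∀ t, f t = v → ∃ t, P t ∧ f t = v := fun t ht => ⟨t, by unfold P; rw [ht]; exact hv, ht⟩
  obtain ⟨h1, h2, h3⟩ := id hv
  simp [B, K, C, Fin.sum_univ_eight,
    show (Fin.succ 0 : Fin 9) = 1 from rfl, show (Fin.succ 1 : Fin 9) = 2 from rfl,
    show (Fin.succ 2 : Fin 9) = 3 from rfl, show (Fin.succ 3 : Fin 9) = 4 from rfl,
    show (Fin.succ 4 : Fin 9) = 5 from rfl, show (Fin.succ 5 : Fin 9) = 6 from rfl,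
    show (Fin.succ 6 : Fin 9) = 7 from rfl, show (Fin.succ 7 : Fin 9) = 8 from rfl,
    show (Fin.last 8 : Fin 9) = 8 from rfl] at h1 h2 h3
  -- now h1 : v0*v0 - (sum of products) = -1 ; h2 : -(v0*3) - (sum) = -1 ; h3 : v 8 = 0
  rw [h3] at h1 h2
  have hs : v 1 + v 2 + v 3 + v 4 + v 5 + v 6 + v 7 = 1 - 3 * v 0 := by linarith
  have hq : (v 1)^2 + (v 2)^2 + (v 3)^2 + (v 4)^2 + (v 5)^2 + (v 6)^2 + (v 7)^2
      = (v 0)^2 + 1 := by nlinarith [h1]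
  have c7 := cs7 (v 1) (v 2) (v 3) (v 4) (v 5) (v 6) (v 7) _ _ hs hq
  have hd0 : 0 ≤ v 0 := by nlinarith [c7]
  have hd3 : v 0 ≤ 3 := by nlinarith [c7]
  have c1 := cs6 (v 1) (v 2) (v 3) (v 4) (v 5) (v 6) (v 7) _ _ hs hq
  have c2 := cs6 (v 2) (v 1) (v 3) (v 4) (v 5) (v 6) (v 7) (1 - 3 * v 0) ((v 0)^2 + 1) (by linarith) (by linarith)
  have c3 := cs6 (v 3) (v 1) (v 2) (v 4) (v 5) (v 6) (v 7) (1 - 3 * v 0) ((v 0)^2 + 1) (by linarith) (by linarith)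
  have c4 := cs6 (v 4) (v 1) (v 2) (v 3) (v 5) (v 6) (v 7) (1 - 3 * v 0) ((v 0)^2 + 1) (by linarith) (by linarith)
  have c5 := cs6 (v 5) (v 1) (v 2) (v 3) (v 4) (v 6) (v 7) (1 - 3 * v 0) ((v 0)^2 + 1) (by linarith) (by linarith)
  have c6 := cs6 (v 6) (v 1) (v 2) (v 3) (v 4) (v 5) (v 7) (1 - 3 * v 0) ((v 0)^2 + 1) (by linarith) (by linarith)
  have c7' := cs6 (v 7) (v 1) (v 2) (v 3) (v 4) (v 5) (v 6) (1 - 3 * v 0) ((v 0)^2 + 1) (by linarith) (by linarith)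
  have hd : v 0 = 0 ∨ v 0 = 1 ∨ v 0 = 2 ∨ v 0 = 3 := by omega
  rcases hd with hd | hd | hd | hd
  · rw [hd] at c1 c2 c3 c4 c5 c6 c7'
    obtain ⟨a1, b1⟩ := q0 _ c1; obtain ⟨a2, b2⟩ := q0 _ c2; obtain ⟨a3, b3⟩ := q0 _ c3
    obtain ⟨a4, b4⟩ := q0 _ c4; obtain ⟨a5, b5⟩ := q0 _ c5; obtain ⟨a6, b6⟩ := q0 _ c6
    obtain ⟨a7, b7⟩ := q0 _ c7'
    apply key (⟨0, by norm_num⟩, ![⟨(v 1 - 0).toNat, by omega⟩, ⟨(v 2 - 0).toNat, by omega⟩,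
      ⟨(v 3 - 0).toNat, by omega⟩, ⟨(v 4 - 0).toNat, by omega⟩, ⟨(v 5 - 0).toNat, by omega⟩,
      ⟨(v 6 - 0).toNat, by omega⟩, ⟨(v 7 - 0).toNat, by omega⟩])
    funext j; fin_cases j <;> simp [f, lo, Matrix.cons_val_succ, show (5:Fin 7) = Fin.succ 4 from rfl, show (6:Fin 7) = Fin.succ 5 from rfl, show (5:Fin 6) = Fin.succ 4 from rfl] <;> omega
  · rw [hd] at c1 c2 c3 c4 c5 c6 c7'
    obtain ⟨a1, b1⟩ := q1 _ c1; obtain ⟨a2, b2⟩ := q1 _ c2; obtain ⟨a3, b3⟩ := q1 _ c3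
    obtain ⟨a4, b4⟩ := q1 _ c4; obtain ⟨a5, b5⟩ := q1 _ c5; obtain ⟨a6, b6⟩ := q1 _ c6
    obtain ⟨a7, b7⟩ := q1 _ c7'
    apply key (⟨1, by norm_num⟩, ![⟨(v 1 + 1).toNat, by omega⟩, ⟨(v 2 + 1).toNat, by omega⟩,
      ⟨(v 3 + 1).toNat, by omega⟩, ⟨(v 4 + 1).toNat, by omega⟩, ⟨(v 5 + 1).toNat, by omega⟩,
      ⟨(v 6 + 1).toNat, by omega⟩, ⟨(v 7 + 1).toNat, by omega⟩])
    funext j; fin_cases j <;> simp [f, lo, Matrix.cons_val_succ, show (5:Fin 7) = Fin.succ 4 from rfl, show (6:Fin 7) = Fin.succ 5 from rfl, show (5:Fin 6) = Fin.succ 4 from rfl] <;> omega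
  · rw [hd] at c1 c2 c3 c4 c5 c6 c7'
    obtain ⟨a1, b1⟩ := q2 _ c1; obtain ⟨a2, b2⟩ := q2 _ c2; obtain ⟨a3, b3⟩ := q2 _ c3
    obtain ⟨a4, b4⟩ := q2 _ c4; obtain ⟨a5, b5⟩ := q2 _ c5; obtain ⟨a6, b6⟩ := q2 _ c6
    obtain ⟨a7, b7⟩ := q2 _ c7'
    apply key (⟨2, by norm_num⟩, ![⟨(v 1 + 1).toNat, by omega⟩, ⟨(v 2 + 1).toNat, by omega⟩,
      ⟨(v 3 + 1).toNat, by omega⟩, ⟨(v 4 + 1).toNat, by omega⟩, ⟨(v 5 + 1).toNat, by omega⟩,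
      ⟨(v 6 + 1).toNat, by omega⟩, ⟨(v 7 + 1).toNat, by omega⟩])
    funext j; fin_cases j <;> simp [f, lo, Matrix.cons_val_succ, show (5:Fin 7) = Fin.succ 4 from rfl, show (6:Fin 7) = Fin.succ 5 from rfl, show (5:Fin 6) = Fin.succ 4 from rfl] <;> omega
  · rw [hd] at c1 c2 c3 c4 c5 c6 c7'
    obtain ⟨a1, b1⟩ := q3 _ c1; obtain ⟨a2, b2⟩ := q3 _ c2; obtain ⟨a3, b3⟩ := q3 _ c3
    obtain ⟨a4, b4⟩ := q3 _ c4; obtain ⟨a5, b5⟩ := q3 _ c5; obtain ⟨a6, b6⟩ := q3 _ c6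
    obtain ⟨a7, b7⟩ := q3 _ c7'
    apply key (⟨3, by norm_num⟩, ![⟨(v 1 + 2).toNat, by omega⟩, ⟨(v 2 + 2).toNat, by omega⟩,
      ⟨(v 3 + 2).toNat, by omega⟩, ⟨(v 4 + 2).toNat, by omega⟩, ⟨(v 5 + 2).toNat, by omega⟩,
      ⟨(v 6 + 2).toNat, by omega⟩, ⟨(v 7 + 2).toNat, by omega⟩])
    funext j; fin_cases j <;> simp [f, lo, Matrix.cons_val_succ, show (5:Fin 7) = Fin.succ 4 from rfl, show (6:Fin 7) = Fin.succ 5 from rfl, show (5:Fin 6) = Fin.succ 4 from rfl] <;> omega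

lemma f_inj : Function.Injective f := by
  rintro ⟨a, s⟩ ⟨a', s'⟩ h
  have h0 := congrFun h 0
  simp [f] at h0
  obtain rfl : a = a' := by exact_mod_cast Fin.ext (by exact_mod_cast h0)
  suffices hs : s = s' by rw [hs]
  funext i
  have hi := congrFun h ⟨(i : ℕ) + 1, by omega⟩
  have hlt : (i : ℕ) + 1 < 8 := by omega
  simp [f, hlt] at hi
  exact Fin.ext (by exact_mod_cast hi)


set_option maxRecDepth 10000 in
theorem E7_lines_card :
    {v : L 7 | B 7 v v = -1 ∧ B 7 v (K 7) = -1 ∧ B 7 v (C 7) = 0}.Finite ∧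
    {v : L 7 | B 7 v v = -1 ∧ B 7 v (K 7) = -1 ∧ B 7 v (C 7) = 0}.ncard
      = 56 := by
  have hset : {v : L 7 | B 7 v v = -1 ∧ B 7 v (K 7) = -1 ∧ B 7 v (C 7) = 0}
      = ↑(Finset.image f (Finset.filter P Finset.univ)) := by
    ext v
    constructor
    · intro hv
      obtain ⟨t, hP, hft⟩ := forward v hv
      exact Finset.mem_coe.2 (Finset.mem_image.2 ⟨t, Finset.mem_filter.2 ⟨Finset.mem_univ t, hP⟩, hft⟩)
    · intro hv
      obtain ⟨t, ht, rfl⟩ := Finset.mem_image.1 (Finset.mem_coe.1 hv)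
      exact (Finset.mem_filter.1 ht).2
  constructor
  · rw [hset]; exact (Finset.image f _).finite_toSet
  · rw [hset, Set.ncard_coe_finset, Finset.card_image_of_injective _ f_inj]
    decide

end ADEPaper
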